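/- If a propositional logic with values in a finite set V of cardinality n (with designated value τ and truth-table operations) makes (p → p) ∨ q a tautology, then the formula ⋁_{i<j≤n} (p_i → p_j) over n+1 distinct atoms is a tautology: every valuation ν : atoms → V maps it to τ. -/
import Mathlib


inductive Fm (α : Type) : Type where
  | top  : Fm α
  | atom : α → Fm α
  | neg  : Fm α → Fm α
  | and  : Fm α → Fm α → Fm α
  | or   : Fm α → Fm α → Fm α
  | imp  : Fm α → Fm α → Fm α

/-- A many-valued truth table: a designated value and operations for the connectives. -/
structure MVLogic (V : Type) where
  tau : V
  mneg : V → V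
  mand : V → V → V
  mor  : V → V → V
  mimp : V → V → V

/-- Homomorphic extension of a valuation of the atoms to all formulas. -/
def MVLogic.eval {V α : Type} (L : MVLogic V) (ν : α → V) : Fm α → V
  | .top => L.tau
  | .atom p => ν p
  | .neg φ => L.mneg (L.eval ν φ)
  | .and φ ψ => L.mand (L.eval ν φ) (L.eval ν ψ)
  | .or φ ψ => L.mor (L.eval ν φ) (L.eval ν ψ)
  | .imp φ ψ => L.mimp (L.eval ν φ) (L.eval ν ψ)

/-- Disjunction of a (nonempty) list of formulas, associated to the right. -/
def disj {α : Type} : List (Fm α) → Fm α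
  | [] => Fm.top
  | [φ] => φ
  | φ :: ψ :: rest => Fm.or φ (disj (ψ :: rest))

/-- The list of formulas  pᵢ → pⱼ  for  i < j ≤ n  (atoms indexed by natural numbers). -/
def pairFms (n : ℕ) : List (Fm ℕ) :=
  (List.range (n+1)).flatMap (fun i =>
    (List.range (n+1)).filterMap (fun j =>
      if i < j then some (Fm.imp (Fm.atom i) (Fm.atom j)) else none))

/-- In any n-valued logic (with commutative associative disjunction) in which
(p → p) ∨ q is a tautology, the formula ⋁_{i<j≤n} (pᵢ → pⱼ) over the n+1 atoms
0, 1, …, n is a tautology. -/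

def Good {V : Type} (L : MVLogic V) (v : V) : Prop :=
  ∀ b, L.mor v b = L.tau ∧ L.mor b v = L.tau

lemma disj_eval_eq_tau {V α : Type} (L : MVLogic V) (ν : α → V)
    (htauGood : Good L L.tau) :
    ∀ l : List (Fm α), 2 ≤ l.length → (∃ φ ∈ l, Good L (L.eval ν φ)) →
      L.eval ν (disj l) = L.tau
  | [] => by simp
  | [φ] => by simp
  | φ :: ψ :: rest => by
    intro _ ⟨χ, hχ, hgood⟩
    have hd : disj (φ :: ψ :: rest) = Fm.or φ (disj (ψ :: rest)) := rfl
    rcases List.mem_cons.mp hχ with h | h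
    · subst h
      simp only [hd, MVLogic.eval]
      exact (hgood _).1
    · cases rest with
      | nil =>
        have : χ = ψ := by simpa using h
        subst this
        simp only [hd, disj, MVLogic.eval]
        exact (hgood _).2
      | cons ψ' rest' =>
        have ih := disj_eval_eq_tau L ν htauGood (ψ :: ψ' :: rest')
          (by simp) ⟨χ, h, hgood⟩
        rw [hd]
        show L.mor (L.eval ν φ) (L.eval ν (disj (ψ :: ψ' :: rest'))) = L.tau
        rw [ih]
        exact (htauGood _).2

lemma mem_pairFms {n i j : ℕ} (hij : i < j) (hj : j ≤ n) :
    Fm.imp (Fm.atom i) (Fm.atom j) ∈ pairFms n := by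
  simp only [pairFms, List.mem_flatMap, List.mem_filterMap, List.mem_range]
  exact ⟨i, by omega, j, by omega, by simp [hij]⟩

lemma two_le_length_of_mem {α : Type} {l : List α} {a b : α}
    (ha : a ∈ l) (hb : b ∈ l) (hab : a ≠ b) : 2 ≤ l.length := by
  match l with
  | [] => simp at ha
  | [x] =>
    simp at ha hb
    exact absurd (ha.trans hb.symm) hab
  | x :: y :: t => simp

theorem pigeonhole_tautology (V : Type) [Fintype V] (n : ℕ) (hcard : Fintype.card V = n)
    (L : MVLogic V)
    (hcomm : ∀ a b, L.mor a b = L.mor b a)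
    (hassoc : ∀ a b c, L.mor (L.mor a b) c = L.mor a (L.mor b c))
    (htaut : ∀ ν : ℕ → V,
      L.eval ν (Fm.or (Fm.imp (Fm.atom 0) (Fm.atom 0)) (Fm.atom 1)) = L.tau) :
    ∀ ν : ℕ → V, L.eval ν (disj (pairFms n)) = L.tau := by
  intro ν
  have hpos : 0 < Fintype.card V := Fintype.card_pos_iff.mpr ⟨L.tau⟩
  have key : ∀ a b : V, L.mor (L.mimp a a) b = L.tau := by
    intro a b
    have := htaut (fun k => if k = 0 then a else b)
    simpa [MVLogic.eval] using this
  have htauGood : Good L L.tau := by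
    intro b
    have h1 : L.tau = L.mor (L.mimp L.tau L.tau) L.tau := (key _ _).symm
    constructor
    · calc L.mor L.tau b = L.mor (L.mor (L.mimp L.tau L.tau) L.tau) b := by rw [← h1]
        _ = L.mor (L.mimp L.tau L.tau) (L.mor L.tau b) := hassoc _ _ _
        _ = L.tau := key _ _
    · rw [hcomm]
      calc L.mor L.tau b = L.mor (L.mor (L.mimp L.tau L.tau) L.tau) b := by rw [← h1]
        _ = L.mor (L.mimp L.tau L.tau) (L.mor L.tau b) := hassoc _ _ _
        _ = L.tau := key _ _
  match n, hcard with
  | 0, hcard => omega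
  | 1, hcard =>
    have : Subsingleton V := Fintype.card_le_one_iff_subsingleton.mp (by omega)
    exact Subsingleton.elim _ _
  | (m+2), hcard =>
    set n := m + 2
    -- pigeonhole
    have hlt : Fintype.card V < Fintype.card (Fin (n+1)) := by simp [hcard, n]
    obtain ⟨i, j, hne, heq⟩ :=
      Fintype.exists_ne_map_eq_of_card_lt (fun k : Fin (n+1) => ν k) hlt
    have hGoodmem : ∃ φ ∈ pairFms n, Good L (L.eval ν φ) := by
      rcases lt_or_gt_of_ne (fun h : i = j => hne h) with hij | hij
      · refine ⟨Fm.imp (Fm.atom i) (Fm.atom j), mem_pairFms hij (by omega), ?_⟩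
        simp only [MVLogic.eval, heq]
        intro b
        exact ⟨key _ _, by rw [hcomm]; exact key _ _⟩
      · refine ⟨Fm.imp (Fm.atom j) (Fm.atom i), mem_pairFms hij (by omega), ?_⟩
        simp only [MVLogic.eval, heq]
        intro b
        exact ⟨key _ _, by rw [hcomm]; exact key _ _⟩
    have hlen : 2 ≤ (pairFms n).length := by
      refine two_le_length_of_mem (a := Fm.imp (Fm.atom 0) (Fm.atom 1))
        (b := Fm.imp (Fm.atom 0) (Fm.atom 2)) (mem_pairFms ?_ ?_) (mem_pairFms ?_ ?_) ?_
      all_goals simp [n]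
    exact disj_eval_eq_tau L ν htauGood (pairFms n) hlen hGoodmem
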